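/- Let k be an algebraically closed field and X a del Pezzo surface of degree 1 given as a smooth sextic V(f) in P_k(1,1,2,3). If Γ = V(z - Q(x,y), w - C(x,y)), with Q, C binary forms of degrees 2, 3, is a divisor on X, then (Γ, -K_X)_X = 1, i.e., Γ meets the anticanonical divisor V(x) in a scheme of degree 1. -/

import Mathlib

open MvPolynomial

noncomputable section

/-- The dimension of the degree-`d` graded piece (for the weights `1,1,2,3` on `x,y,z,w`)
of the quotient of `k[x,y,z,w]` by the homogeneous ideal `I`; for `d` large this is the
degree of the closed subscheme of `P_k(1,1,2,3)` cut out by `I`. -/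
def pieceRank (k : Type*) [Field k] (I : Ideal (MvPolynomial (Fin 4) k)) (d : ℕ) : ℕ :=
  Module.finrank k
    (↥(weightedHomogeneousSubmodule k ![1, 1, 2, 3] d) ⧸
      (Submodule.comap (weightedHomogeneousSubmodule k ![1, 1, 2, 3] d).subtype
        (I.restrictScalars k)))

namespace Stmt2Aux

variable {k : Type*} [Field k]

/-- The ideal of Γ ∩ V(x). -/
def Igen (q c : MvPolynomial (Fin 2) k) : Ideal (MvPolynomial (Fin 4) k) :=
  Ideal.span {X 2 - rename ![0, 1] q, X 3 - rename ![0, 1] c, X 0}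

/-- The point where everything is evaluated. -/
def Pt (q c : MvPolynomial (Fin 2) k) : Fin 4 → k :=
  ![0, 1, eval ![0, 1] q, eval ![0, 1] c]

lemma comp_eq (a b : k) :
    (![0, 1, a, b] : Fin 4 → k) ∘ (![0, 1] : Fin 2 → Fin 4) = ![0, 1] := by
  funext i
  fin_cases i <;> rfl

lemma eval_Igen (q c : MvPolynomial (Fin 2) k) {g : MvPolynomial (Fin 4) k}
    (hg : g ∈ Igen q c) : eval (Pt q c) g = 0 := by
  have : Igen q c ≤ RingHom.ker (eval (Pt q c)) := by
    rw [Igen, Ideal.span_le]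
    rintro x hx
    simp only [Set.mem_insert_iff, Set.mem_singleton_iff] at hx
    rcases hx with rfl | rfl | rfl <;>
      simp [RingHom.mem_ker, eval_rename, Pt, comp_eq]
  exact this hg

lemma support_single {n : ℕ} {g : MvPolynomial (Fin 2) k} (hg : g.IsHomogeneous n)
    {m : Fin 2 →₀ ℕ} (hm : m ∈ g.support) (h0 : m 0 = 0) : m = Finsupp.single 1 n := by
  have hd : (Finsupp.weight 1) m = n := hg (mem_support_iff.mp hm)
  rw [Finsupp.weight_apply, Finsupp.sum_fintype _ _ (by intro i; rfl)] at hd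
  simp only [Fin.sum_univ_two, smul_eq_mul, Pi.one_apply, mul_one, h0, zero_add] at hd
  ext i
  fin_cases i <;> simp [h0, hd, Finsupp.single_apply]

lemma eval_homog {n : ℕ} {g : MvPolynomial (Fin 2) k} (hg : g.IsHomogeneous n) :
    eval ![0, 1] g = coeff (Finsupp.single 1 n) g := by
  rw [eval_eq']
  rw [Finset.sum_eq_single (Finsupp.single 1 n)]
  · rw [Fin.prod_univ_two]
    simp [Finsupp.single_apply]
  · intro b hb hbne
    have hb0 : b 0 ≠ 0 := fun h => hbne (support_single hg hb h)
    rw [Fin.prod_univ_two]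
    simp [zero_pow hb0]
  · intro h
    rw [notMem_support_iff.mp h, zero_mul]

lemma subA {n : ℕ} {g : MvPolynomial (Fin 2) k} (hg : g.IsHomogeneous n) :
    rename ![0, 1] g - MvPolynomial.C (eval ![0, 1] g) * X 1 ^ n ∈
      Ideal.span {(X 0 : MvPolynomial (Fin 4) k)} := by
  have h2 : g - MvPolynomial.C (eval ![0, 1] g) * X 1 ^ n ∈
      Ideal.span {(X 0 : MvPolynomial (Fin 2) k)} := by
    rw [← Set.image_singleton, mem_ideal_span_X_image]
    intro m hm
    refine ⟨0, rfl, ?_⟩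
    intro h0
    apply mem_support_iff.mp hm
    rw [coeff_sub, coeff_C_mul, coeff_X_pow]
    by_cases hmm : Finsupp.single 1 n = m
    · rw [if_pos hmm, mul_one, eval_homog hg, hmm, sub_self]
    · rw [if_neg hmm, mul_zero, sub_zero]
      by_contra hne
      exact hmm ((support_single hg (mem_support_iff.mpr hne) h0)).symm
  have hmap := Ideal.mem_map_of_mem (rename (![0, 1] : Fin 2 → Fin 4)).toRingHom h2
  rw [Ideal.map_span, Set.image_singleton] at hmap
  simpa using hmap

lemma subA' (q c : MvPolynomial (Fin 2) k) {n : ℕ} {g : MvPolynomial (Fin 2) k}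
    (hg : g.IsHomogeneous n) :
    rename ![0, 1] g - MvPolynomial.C (eval ![0, 1] g) * X 1 ^ n ∈ Igen q c := by
  refine Ideal.span_le.mpr ?_ (subA hg)
  intro x hx
  rw [Set.mem_singleton_iff] at hx
  subst hx
  exact Ideal.subset_span (by simp)

lemma weight_eq {d : ℕ} {m : Fin 4 →₀ ℕ}
    (hd : (Finsupp.weight ![1, 1, 2, 3]) m = d) (h0 : m 0 = 0) :
    m 1 + 2 * m 2 + 3 * m 3 = d := by
  rw [Finsupp.weight_apply, Finsupp.sum_fintype _ _ (by intro i; simp)] at hd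
  simp only [Fin.sum_univ_four, smul_eq_mul, h0, zero_mul, zero_add,
    Matrix.cons_val_one, Matrix.head_cons, Matrix.cons_val_two, Matrix.tail_cons,
    Matrix.cons_val_three] at hd
  simp only [Matrix.cons_val, one_mul] at hd
  omega

lemma key (q c : MvPolynomial (Fin 2) k) (hq : q.IsHomogeneous 2) (hc : c.IsHomogeneous 3)
    {d : ℕ} {p : MvPolynomial (Fin 4) k} (hp : p.IsWeightedHomogeneous ![1, 1, 2, 3] d) :
    p - MvPolynomial.C (eval (Pt q c) p) * X 1 ^ d ∈ Igen q c := by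
  set I := Igen q c with hI
  rw [← Ideal.Quotient.eq]
  set mk := Ideal.Quotient.mk I with hmk
  have hx0 : mk (X 0) = 0 :=
    Ideal.Quotient.eq_zero_iff_mem.mpr (Ideal.subset_span (by simp))
  have hx2 : mk (X 2) = mk (MvPolynomial.C (eval ![0, 1] q)) * mk (X 1) ^ 2 := by
    have h1 : mk (X 2) = mk (rename ![0, 1] q) :=
      Ideal.Quotient.eq.mpr (Ideal.subset_span (by simp))
    have h2 : mk (rename ![0, 1] q)
        = mk (MvPolynomial.C (eval ![0, 1] q) * X 1 ^ 2) :=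
      Ideal.Quotient.eq.mpr (subA' q c hq)
    rw [h1, h2, map_mul, map_pow]
  have hx3 : mk (X 3) = mk (MvPolynomial.C (eval ![0, 1] c)) * mk (X 1) ^ 3 := by
    have h1 : mk (X 3) = mk (rename ![0, 1] c) :=
      Ideal.Quotient.eq.mpr (Ideal.subset_span (by simp))
    have h2 : mk (rename ![0, 1] c)
        = mk (MvPolynomial.C (eval ![0, 1] c) * X 1 ^ 3) :=
      Ideal.Quotient.eq.mpr (subA' q c hc)
    rw [h1, h2, map_mul, map_pow]
  have hmono : ∀ (m : Fin 4 →₀ ℕ) (a : k),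
      (monomial m a : MvPolynomial (Fin 4) k)
        = MvPolynomial.C a * X 0 ^ m 0 * X 1 ^ m 1 * X 2 ^ m 2 * X 3 ^ m 3 := by
    intro m a
    rw [monomial_eq, Finsupp.prod_fintype _ _ (by intro i; exact pow_zero _),
      Fin.prod_univ_four]
    ring
  have heval : ∀ (m : Fin 4 →₀ ℕ) (a : k),
      eval (Pt q c) (monomial m a)
        = a * (0 : k) ^ m 0 * 1 ^ m 1 * (eval ![0, 1] q) ^ m 2 * (eval ![0, 1] c) ^ m 3 := by
    intro m a
    rw [eval_monomial, Finsupp.prod_fintype _ _ (by intro i; exact pow_zero _),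
      Fin.prod_univ_four]
    simp only [Pt, Matrix.cons_val_zero, Matrix.cons_val_one, Matrix.head_cons,
      Matrix.cons_val_two, Matrix.tail_cons, Matrix.cons_val_three]
    ring
  have hkey : ∀ m ∈ p.support,
      mk (monomial m (coeff m p))
        = mk (MvPolynomial.C (eval (Pt q c) (monomial m (coeff m p))) * X 1 ^ d) := by
    intro m hm
    have hwd : (Finsupp.weight ![1, 1, 2, 3]) m = d := hp (mem_support_iff.mp hm)
    set a := coeff m p
    by_cases h0 : m 0 = 0
    · have hsum := weight_eq hwd h0
      rw [heval, hmono, h0]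
      simp only [pow_zero, one_pow, mul_one, map_mul, map_pow, hx2, hx3, C_mul, C_pow]
      rw [← hsum]
      ring
    · rw [heval, hmono, zero_pow h0]
      simp [hx0, zero_pow h0]
  calc mk p = ∑ m ∈ p.support, mk (monomial m (coeff m p)) := by
        conv_lhs => rw [as_sum p]
        exact map_sum mk _ _
    _ = ∑ m ∈ p.support,
          mk (MvPolynomial.C (eval (Pt q c) (monomial m (coeff m p))) * X 1 ^ d) :=
        Finset.sum_congr rfl hkey
    _ = mk (MvPolynomial.C (eval (Pt q c) p) * X 1 ^ d) := by
        conv_rhs => rw [as_sum p]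
        rw [map_sum (eval (Pt q c)), map_sum MvPolynomial.C, Finset.sum_mul, map_sum]

lemma iwh_pow {w : Fin 4 → ℕ} {φ : MvPolynomial (Fin 4) k} {n : ℕ}
    (h : φ.IsWeightedHomogeneous w n) (m : ℕ) :
    (φ ^ m).IsWeightedHomogeneous w (m * n) := by
  induction m with
  | zero => simpa using isWeightedHomogeneous_one k w
  | succ m ih =>
      rw [pow_succ, Nat.succ_mul]
      exact ih.mul h

lemma X1_pow_mem (d : ℕ) :
    (X 1 : MvPolynomial (Fin 4) k) ^ d
      ∈ weightedHomogeneousSubmodule k ![1, 1, 2, 3] d := by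
  rw [mem_weightedHomogeneousSubmodule]
  have h1 : (X 1 : MvPolynomial (Fin 4) k).IsWeightedHomogeneous ![1, 1, 2, 3] 1 := by
    simpa using isWeightedHomogeneous_X k ![1, 1, 2, 3] 1
  simpa using iwh_pow h1 d

end Stmt2Aux

set_option synthInstance.maxHeartbeats 1000000 in
/-- Let `k` be algebraically closed and `X = V(f)` a smooth sextic in
`P_k(1,1,2,3)` (a del Pezzo surface of degree 1). If `Γ = V(z - Q, w - C)` (with `Q, C`
binary forms of degrees 2, 3) is a divisor on `X`, then `(Γ, -K_X)_X = 1`: `Γ` meets the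
anticanonical divisor `V(x)` in a scheme of degree 1, i.e. the scheme with ideal
`(z - Q, w - C, x)` has degree 1. -/
theorem stmt_2 (k : Type*) [Field k] [IsAlgClosed k]
    (f : MvPolynomial (Fin 4) k)
    (hf : MvPolynomial.IsWeightedHomogeneous ![1, 1, 2, 3] f 6)
    (hsmooth : ∀ P : Fin 4 → k,
        eval P f = 0 → (∀ i : Fin 4, eval P (pderiv i f) = 0) → P = 0)
    (Q C : MvPolynomial (Fin 2) k)
    (hQ : Q.IsHomogeneous 2) (hC : C.IsHomogeneous 3)
    (hΓ : aeval ![(X 0 : MvPolynomial (Fin 2) k), X 1, Q, C] f = 0) :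
    ∀ d : ℕ, 1 ≤ d →
      pieceRank k
        (Ideal.span {X 2 - rename ![0, 1] Q, X 3 - rename ![0, 1] C, X 0}) d = 1 := by
  intro d _hd
  classical
  set I : Ideal (MvPolynomial (Fin 4) k) := Stmt2Aux.Igen Q C with hI
  show Module.finrank k
    (↥(weightedHomogeneousSubmodule k ![1, 1, 2, 3] d) ⧸
      (Submodule.comap (weightedHomogeneousSubmodule k ![1, 1, 2, 3] d).subtype
        (I.restrictScalars k))) = 1
  set V := weightedHomogeneousSubmodule k ![1, 1, 2, 3] d with hV
  set W := Submodule.comap V.subtype (I.restrictScalars k) with hW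
  have hmemW : ∀ x : V, x ∈ W ↔ (x : MvPolynomial (Fin 4) k) ∈ I := fun x => Iff.rfl
  have hX1d : (X 1 : MvPolynomial (Fin 4) k) ^ d ∈ V := Stmt2Aux.X1_pow_mem d
  set v : V ⧸ W := Submodule.Quotient.mk ⟨X 1 ^ d, hX1d⟩ with hv
  refine _root_.finrank_eq_one v ?_ ?_
  · intro hv0
    rw [hv, Submodule.Quotient.mk_eq_zero] at hv0
    have h1 : (X 1 : MvPolynomial (Fin 4) k) ^ d ∈ I := (hmemW _).mp hv0
    have h2 := Stmt2Aux.eval_Igen Q C h1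
    simp [Stmt2Aux.Pt] at h2
  · intro w
    obtain ⟨⟨p, hp⟩, rfl⟩ := Submodule.mkQ_surjective W w
    refine ⟨eval (Stmt2Aux.Pt Q C) p, ?_⟩
    set e := eval (Stmt2Aux.Pt Q C) p with he
    rw [Submodule.mkQ_apply, hv, ← Submodule.Quotient.mk_smul, Submodule.Quotient.eq]
    have hph : p.IsWeightedHomogeneous ![1, 1, 2, 3] d :=
      (mem_weightedHomogeneousSubmodule k ![1, 1, 2, 3] d p).mp hp
    have hkey := Stmt2Aux.key Q C hQ hC hph
    have hneg : MvPolynomial.C e * X 1 ^ d - p ∈ I := by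
      have := I.neg_mem hkey
      simpa [neg_sub] using this
    refine (hmemW _).mpr ?_
    have hcoe : ((e • (⟨X 1 ^ d, hX1d⟩ : V) - ⟨p, hp⟩ : V) : MvPolynomial (Fin 4) k)
        = e • X 1 ^ d - p := rfl
    rw [hcoe, smul_eq_C_mul]
    exact hneg

end
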